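/- Let Σ, Σ̂ ∈ ℝ^{p×p} be symmetric positive semidefinite, t > 0, Σ_t := Σ + t⁻¹I_p, Σ̂_t := Σ̂ + t⁻¹I_p, and suppose ‖Σ_t^{−1/2}(Σ̂ − Σ)Σ_t^{−1/2}‖_op ≤ □ for some □ ≤ 1/2. Then ‖Σ_t^{−1/2}Σ̂_t^{1/2}‖_op² ≤ 1 + □ ≤ 2 and ‖Σ_t^{1/2}Σ̂_t^{−1/2}‖_op² ≤ 2. Consequently, for any orthogonal projection P commuting with Σ and satisfying PΣP ≼ Σ_t (in particular for P = P_{J} a spectral projection of Σ), ‖(PΣP)^{1/2}Σ̂_t^{−1/2}‖_op² ≤ 2. -/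

import Mathlib

open Matrix

namespace SpecFSD11

noncomputable def l2norm {n : ℕ} (v : Fin n → ℝ) : ℝ := Real.sqrt (∑ i, v i ^ 2)

/-- The ℓ₂ → ℓ₂ operator norm of a real matrix. -/
noncomputable def opNorm {m n : ℕ} (A : Matrix (Fin m) (Fin n) ℝ) : ℝ :=
  sSup ((fun v => l2norm (A.mulVec v)) '' {v : Fin n → ℝ | l2norm v ≤ 1})

lemma l2norm_nonneg {n : ℕ} (v : Fin n → ℝ) : 0 ≤ l2norm v := Real.sqrt_nonneg _

lemma l2norm_sq {n : ℕ} (v : Fin n → ℝ) : l2norm v ^ 2 = v ⬝ᵥ v := by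
  rw [l2norm, Real.sq_sqrt (by positivity)]
  simp [dotProduct, sq]

lemma l2norm_eq_zero {n : ℕ} {v : Fin n → ℝ} (h : l2norm v = 0) : v = 0 := by
  have h2 : ∑ i, v i ^ 2 = 0 := by
    have := congrArg (· ^ 2) h
    simpa [Real.sq_sqrt (show (0:ℝ) ≤ ∑ i, v i ^ 2 by positivity), l2norm] using this
  funext i
  have := (Finset.sum_eq_zero_iff_of_nonneg (fun i _ => sq_nonneg (v i))).mp h2 i
    (Finset.mem_univ i)
  exact pow_eq_zero_iff (two_ne_zero) |>.mp this

lemma l2norm_zero {n : ℕ} : l2norm (0 : Fin n → ℝ) = 0 := by simp [l2norm]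

lemma l2norm_smul {n : ℕ} (c : ℝ) (v : Fin n → ℝ) : l2norm (c • v) = |c| * l2norm v := by
  rw [l2norm, l2norm]
  have : ∑ i, (c • v) i ^ 2 = c ^ 2 * ∑ i, v i ^ 2 := by
    rw [Finset.mul_sum]; refine Finset.sum_congr rfl fun i _ => by simp [mul_pow]
  rw [this, Real.sqrt_mul (sq_nonneg c), Real.sqrt_sq_eq_abs]

lemma l2norm_neg {n : ℕ} (v : Fin n → ℝ) : l2norm (-v) = l2norm v := by
  simp [l2norm]

lemma dot_le_l2 {n : ℕ} (v w : Fin n → ℝ) : v ⬝ᵥ w ≤ l2norm v * l2norm w := by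
  have := Real.sum_mul_le_sqrt_mul_sqrt Finset.univ v w
  simpa [dotProduct, l2norm] using this

lemma opNorm_nonneg {m n : ℕ} (A : Matrix (Fin m) (Fin n) ℝ) : 0 ≤ opNorm A := by
  apply Real.sSup_nonneg
  rintro x ⟨v, hv, rfl⟩
  exact l2norm_nonneg _

lemma opNorm_le {m n : ℕ} {A : Matrix (Fin m) (Fin n) ℝ} {c : ℝ} (hc : 0 ≤ c)
    (h : ∀ v, l2norm v ≤ 1 → l2norm (A.mulVec v) ≤ c) : opNorm A ≤ c :=
  Real.sSup_le (by rintro x ⟨v, hv, rfl⟩; exact h v hv) hc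

lemma opNorm_bdd {m n : ℕ} (A : Matrix (Fin m) (Fin n) ℝ) :
    BddAbove ((fun v => l2norm (A.mulVec v)) '' {v : Fin n → ℝ | l2norm v ≤ 1}) := by
  refine ⟨Real.sqrt (∑ i, ∑ j, A i j ^ 2), ?_⟩
  rintro x ⟨v, hv, rfl⟩
  have hv' : l2norm v ≤ 1 := hv
  have hv1 : ∑ j, v j ^ 2 ≤ 1 := by
    have h1 : l2norm v ^ 2 ≤ 1 := by nlinarith [l2norm_nonneg v]
    rw [l2norm, Real.sq_sqrt (by positivity)] at h1
    exact h1
  have key : ∑ i, (A.mulVec v) i ^ 2 ≤ ∑ i, ∑ j, A i j ^ 2 := by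
    apply Finset.sum_le_sum; intro i _
    have hcs := Finset.sum_mul_sq_le_sq_mul_sq Finset.univ (fun j => A i j) v
    have hA : (A.mulVec v) i = ∑ j, A i j * v j := rfl
    calc (A.mulVec v) i ^ 2 = (∑ j, A i j * v j) ^ 2 := by rw [hA]
      _ ≤ (∑ j, A i j ^ 2) * (∑ j, v j ^ 2) := hcs
      _ ≤ (∑ j, A i j ^ 2) * 1 := by
          apply mul_le_mul_of_nonneg_left hv1 (by positivity)
      _ = ∑ j, A i j ^ 2 := mul_one _
  exact Real.sqrt_le_sqrt key

lemma le_opNorm {m n : ℕ} (A : Matrix (Fin m) (Fin n) ℝ) (v : Fin n → ℝ) :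
    l2norm (A.mulVec v) ≤ opNorm A * l2norm v := by
  rcases eq_or_lt_of_le (l2norm_nonneg v) with h0 | hpos
  · have hv : v = 0 := l2norm_eq_zero h0.symm
    simp [hv, Matrix.mulVec_zero, l2norm_zero, ← h0]
  · set c := l2norm v with hc
    have hmem : l2norm (A.mulVec (c⁻¹ • v)) ∈
        ((fun v => l2norm (A.mulVec v)) '' {v : Fin n → ℝ | l2norm v ≤ 1}) := by
      refine ⟨c⁻¹ • v, ?_, rfl⟩
      simp only [Set.mem_setOf_eq, l2norm_smul, abs_of_pos (inv_pos.2 hpos), ← hc]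
      rw [inv_mul_cancel₀ (ne_of_gt hpos)]
    have hle := le_csSup (opNorm_bdd A) hmem
    rw [Matrix.mulVec_smul, l2norm_smul, abs_of_pos (inv_pos.2 hpos)] at hle
    have := mul_le_mul_of_nonneg_left hle (le_of_lt hpos)
    rw [← mul_assoc, mul_inv_cancel₀ (ne_of_gt hpos), one_mul] at this
    rw [opNorm]
    linarith [this]

lemma conjT_eq_transpose {m n : ℕ} (A : Matrix (Fin m) (Fin n) ℝ) : Aᴴ = Aᵀ :=
  conjTranspose_eq_transpose_of_trivial A

lemma l2norm_mulVec_sq {n : ℕ} (A : Matrix (Fin n) (Fin n) ℝ) (v : Fin n → ℝ) :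
    l2norm (A.mulVec v) ^ 2 = v ⬝ᵥ (Aᴴ * A).mulVec v := by
  rw [l2norm_sq, conjT_eq_transpose, ← Matrix.mulVec_mulVec,
    Matrix.dotProduct_mulVec v Aᵀ (A.mulVec v), Matrix.vecMul_transpose]

lemma sq_opNorm_le {n : ℕ} {A : Matrix (Fin n) (Fin n) ℝ} {c : ℝ} (hc : 0 ≤ c)
    (h : (c • (1 : Matrix (Fin n) (Fin n) ℝ) - Aᴴ * A).PosSemidef) : opNorm A ^ 2 ≤ c := by
  have h1 : opNorm A ≤ Real.sqrt c := by
    apply opNorm_le (Real.sqrt_nonneg c)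
    intro v hv
    have hq := h.dotProduct_mulVec_nonneg v
    have hv1 : v ⬝ᵥ v ≤ 1 := by
      have := l2norm_sq v
      nlinarith [l2norm_nonneg v]
    have hexp : star v ⬝ᵥ (c • (1 : Matrix (Fin n) (Fin n) ℝ) - Aᴴ * A).mulVec v
        = c * (v ⬝ᵥ v) - v ⬝ᵥ (Aᴴ * A).mulVec v := by
      rw [Matrix.sub_mulVec, Matrix.smul_mulVec, Matrix.one_mulVec, dotProduct_sub,
        dotProduct_smul, star_trivial, smul_eq_mul]
    rw [hexp] at hq
    have h2 : l2norm (A.mulVec v) ^ 2 ≤ c := by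
      rw [l2norm_mulVec_sq]
      nlinarith [hq, hv1]
    calc l2norm (A.mulVec v) = Real.sqrt (l2norm (A.mulVec v) ^ 2) :=
        (Real.sqrt_sq (l2norm_nonneg _)).symm
      _ ≤ Real.sqrt c := Real.sqrt_le_sqrt h2
  calc opNorm A ^ 2 ≤ Real.sqrt c ^ 2 := by
        apply pow_le_pow_left₀ (opNorm_nonneg A) h1
    _ = c := Real.sq_sqrt hc

lemma opNorm_transpose_le {n : ℕ} (A : Matrix (Fin n) (Fin n) ℝ) : opNorm Aᵀ ≤ opNorm A := by
  apply opNorm_le (opNorm_nonneg A)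
  intro v hv
  set w := Aᵀ.mulVec v with hw
  have h1 : l2norm w ^ 2 = (A.mulVec w) ⬝ᵥ v := by
    rw [l2norm_sq, hw, Matrix.dotProduct_mulVec, Matrix.vecMul_transpose]
  have h2 : (A.mulVec w) ⬝ᵥ v ≤ l2norm (A.mulVec w) * l2norm v := dot_le_l2 _ _
  have h3 : l2norm (A.mulVec w) ≤ opNorm A * l2norm w := le_opNorm A w
  have h4 : l2norm w ^ 2 ≤ opNorm A * l2norm w := by
    calc l2norm w ^ 2 = (A.mulVec w) ⬝ᵥ v := h1
      _ ≤ l2norm (A.mulVec w) * l2norm v := h2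
      _ ≤ l2norm (A.mulVec w) * 1 := by
          apply mul_le_mul_of_nonneg_left hv (l2norm_nonneg _)
      _ = l2norm (A.mulVec w) := mul_one _
      _ ≤ opNorm A * l2norm w := h3
  nlinarith [l2norm_nonneg w, opNorm_nonneg A, h4]

lemma opNorm_neg {m n : ℕ} (A : Matrix (Fin m) (Fin n) ℝ) : opNorm (-A) = opNorm A := by
  unfold opNorm
  have : (fun v => l2norm ((-A).mulVec v)) = fun v => l2norm (A.mulVec v) := by
    funext v; rw [Matrix.neg_mulVec, l2norm_neg]
  rw [this]

lemma dotProduct_self_pos {n : ℕ} {v : Fin n → ℝ} (hv : v ≠ 0) : 0 < v ⬝ᵥ v := by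
  rcases eq_or_lt_of_le (l2norm_nonneg v) with h0 | hpos
  · exact absurd (l2norm_eq_zero h0.symm) hv
  · have := l2norm_sq v
    nlinarith

lemma psd_of_opNorm_le {n : ℕ} {E : Matrix (Fin n) (Fin n) ℝ} (hherm : E.IsHermitian) {b : ℝ}
    (h : opNorm E ≤ b) : (b • (1 : Matrix (Fin n) (Fin n) ℝ) + E).PosSemidef := by
  refine Matrix.PosSemidef.of_dotProduct_mulVec_nonneg ?_ ?_
  · have h1 : (b • (1 : Matrix (Fin n) (Fin n) ℝ)).IsHermitian := by
      unfold Matrix.IsHermitian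
      rw [Matrix.conjTranspose_smul, Matrix.conjTranspose_one, star_trivial]
    exact h1.add hherm
  · intro x
    have hexp : star x ⬝ᵥ (b • (1 : Matrix (Fin n) (Fin n) ℝ) + E).mulVec x
        = b * (x ⬝ᵥ x) + x ⬝ᵥ E.mulVec x := by
      rw [Matrix.add_mulVec, Matrix.smul_mulVec, Matrix.one_mulVec, dotProduct_add,
        dotProduct_smul, star_trivial, smul_eq_mul]
    rw [hexp]
    have hcs : x ⬝ᵥ (-(E.mulVec x)) ≤ l2norm x * l2norm (E.mulVec x) := by
      have := dot_le_l2 x (-(E.mulVec x))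
      rwa [l2norm_neg] at this
    have h3 : l2norm (E.mulVec x) ≤ opNorm E * l2norm x := le_opNorm E x
    have hb : 0 ≤ b := le_trans (opNorm_nonneg E) h
    have hsq := l2norm_sq x
    have hdn : x ⬝ᵥ (-(E.mulVec x)) = -(x ⬝ᵥ E.mulVec x) := by
      simp [dotProduct_neg]
    rw [hdn] at hcs
    nlinarith [l2norm_nonneg x, l2norm_nonneg (E.mulVec x), opNorm_nonneg E,
      mul_le_mul_of_nonneg_left h3 (l2norm_nonneg x)]

lemma smul_one_posDef {n : ℕ} {c : ℝ} (hc : 0 < c) :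
    (c • (1 : Matrix (Fin n) (Fin n) ℝ)).PosDef := by
  refine Matrix.PosDef.of_dotProduct_mulVec_pos ?_ ?_
  · unfold Matrix.IsHermitian
    rw [Matrix.conjTranspose_smul, Matrix.conjTranspose_one, star_trivial]
  · intro x hx
    have hexp : star x ⬝ᵥ (c • (1 : Matrix (Fin n) (Fin n) ℝ)).mulVec x = c * (x ⬝ᵥ x) := by
      rw [Matrix.smul_mulVec, Matrix.one_mulVec, dotProduct_smul, star_trivial,
        smul_eq_mul]
    rw [hexp]
    exact mul_pos hc (dotProduct_self_pos hx)

lemma smul_one_posSemidef {n : ℕ} {c : ℝ} (hc : 0 ≤ c) :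
    (c • (1 : Matrix (Fin n) (Fin n) ℝ)).PosSemidef := by
  refine Matrix.PosSemidef.of_dotProduct_mulVec_nonneg ?_ ?_
  · unfold Matrix.IsHermitian
    rw [Matrix.conjTranspose_smul, Matrix.conjTranspose_one, star_trivial]
  · intro x
    have hexp : star x ⬝ᵥ (c • (1 : Matrix (Fin n) (Fin n) ℝ)).mulVec x = c * (x ⬝ᵥ x) := by
      rw [Matrix.smul_mulVec, Matrix.one_mulVec, dotProduct_smul, star_trivial,
        smul_eq_mul]
    rw [hexp]
    have := l2norm_sq x
    nlinarith [l2norm_nonneg x]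

lemma posDef_of_sq {n : ℕ} {A : Matrix (Fin n) (Fin n) ℝ} (hA : A.PosSemidef)
    (h : (A * A).PosDef) : A.PosDef := by
  refine Matrix.PosDef.of_dotProduct_mulVec_pos hA.1 fun x hx =>
    lt_of_le_of_ne (hA.dotProduct_mulVec_nonneg x) fun heq => ?_
  have h0 : A.mulVec x = 0 := (hA.dotProduct_mulVec_zero_iff x).mp heq.symm
  have hlt := h.dotProduct_mulVec_pos hx
  rw [← Matrix.mulVec_mulVec, h0, Matrix.mulVec_zero, dotProduct_zero] at hlt
  exact lt_irrefl 0 hlt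

/-- Let `Σ, Σ̂` be symmetric PSD, `t > 0`, `Σ_t := Σ + t⁻¹I`,
`Σ̂_t := Σ̂ + t⁻¹I`, and suppose `‖Σ_t^{−1/2}(Σ̂ − Σ)Σ_t^{−1/2}‖_op ≤ □ ≤ 1/2`. Then
`‖Σ_t^{−1/2}Σ̂_t^{1/2}‖_op² ≤ 1 + □ ≤ 2` and `‖Σ_t^{1/2}Σ̂_t^{−1/2}‖_op² ≤ 2`.
Consequently, for any orthogonal projection `P` commuting with `Σ` and with
`PΣP ≼ Σ_t`, one has `‖(PΣP)^{1/2}Σ̂_t^{−1/2}‖_op² ≤ 2`.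
The square roots are characterized: `StH² = Σ_t`, `StIH` is PSD with `Σ_t·StIH² = 1`,
`ShtH² = Σ̂_t`, `ShtIH` PSD with `Σ̂_t·ShtIH² = 1`, and `Q² = PΣP` with `Q` PSD. -/
theorem change_of_norm_lemma {p : ℕ}
    (Sigma Sigmahat StH StIH ShtH ShtIH : Matrix (Fin p) (Fin p) ℝ)
    (t Box : ℝ) (ht : 0 < t) (hBox : 0 ≤ Box) (hBox' : Box ≤ 1 / 2)
    (hSigma : Sigma.PosSemidef) (hSigmahat : Sigmahat.PosSemidef)
    (hStH : StH.PosSemidef)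
    (hStHsq : StH * StH = Sigma + t⁻¹ • (1 : Matrix (Fin p) (Fin p) ℝ))
    (hStIH : StIH.PosSemidef)
    (hStIHsq : (Sigma + t⁻¹ • (1 : Matrix (Fin p) (Fin p) ℝ)) * (StIH * StIH) = 1)
    (hShtH : ShtH.PosSemidef)
    (hShtHsq : ShtH * ShtH = Sigmahat + t⁻¹ • (1 : Matrix (Fin p) (Fin p) ℝ))
    (hShtIH : ShtIH.PosSemidef)
    (hShtIHsq : (Sigmahat + t⁻¹ • (1 : Matrix (Fin p) (Fin p) ℝ)) * (ShtIH * ShtIH) = 1)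
    (hevent : opNorm (StIH * (Sigmahat - Sigma) * StIH) ≤ Box) :
    (opNorm (StIH * ShtH) ^ 2 ≤ 1 + Box ∧ (1 : ℝ) + Box ≤ 2) ∧
    opNorm (StH * ShtIH) ^ 2 ≤ 2 ∧
    ∀ P Q : Matrix (Fin p) (Fin p) ℝ, P.IsSymm → P * P = P → P * Sigma = Sigma * P →
      ((Sigma + t⁻¹ • (1 : Matrix (Fin p) (Fin p) ℝ)) - P * Sigma * P).PosSemidef →
      Q.PosSemidef → Q * Q = P * Sigma * P →
      opNorm (Q * ShtIH) ^ 2 ≤ 2 := by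
  set St := Sigma + t⁻¹ • (1 : Matrix (Fin p) (Fin p) ℝ) with hStdef
  set Sht := Sigmahat + t⁻¹ • (1 : Matrix (Fin p) (Fin p) ℝ) with hShtdef
  have hIt : (t⁻¹ • (1 : Matrix (Fin p) (Fin p) ℝ)).PosDef := smul_one_posDef (inv_pos.2 ht)
  have hStPD : St.PosDef := Matrix.PosDef.posSemidef_add hSigma hIt
  have hShtPD : Sht.PosDef := Matrix.PosDef.posSemidef_add hSigmahat hIt
  have hStHPD : StH.PosDef := posDef_of_sq hStH (by rw [hStHsq]; exact hStPD)
  have hShtHPD : ShtH.PosDef := posDef_of_sq hShtH (by rw [hShtHsq]; exact hShtPD)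
  have hStH_det : IsUnit StH.det := isUnit_iff_ne_zero.mpr hStHPD.det_pos.ne'
  have hShtH_det : IsUnit ShtH.det := isUnit_iff_ne_zero.mpr hShtHPD.det_pos.ne'
  have hStIHeq : StIH = StH⁻¹ := by
    have h1 : St⁻¹ = StIH * StIH := Matrix.inv_eq_right_inv hStIHsq
    have h2 : StIH ^ 2 = StH⁻¹ ^ 2 := by
      rw [pow_two, pow_two, ← h1, ← hStHsq, Matrix.mul_inv_rev]
    exact (open scoped MatrixOrder in
      (CFC.sq_eq_sq_iff StIH StH⁻¹ hStIH.nonneg hStHPD.inv.posSemidef.nonneg).mp h2)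
  have hShtIHeq : ShtIH = ShtH⁻¹ := by
    have h1 : Sht⁻¹ = ShtIH * ShtIH := Matrix.inv_eq_right_inv hShtIHsq
    have h2 : ShtIH ^ 2 = ShtH⁻¹ ^ 2 := by
      rw [pow_two, pow_two, ← h1, ← hShtHsq, Matrix.mul_inv_rev]
    exact (open scoped MatrixOrder in
      (CFC.sq_eq_sq_iff ShtIH ShtH⁻¹ hShtIH.nonneg hShtHPD.inv.posSemidef.nonneg).mp h2)
  have hStH_mul : StH * StIH = 1 := by rw [hStIHeq]; exact Matrix.mul_nonsing_inv _ hStH_det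
  have hStIH_mul : StIH * StH = 1 := by rw [hStIHeq]; exact Matrix.nonsing_inv_mul _ hStH_det
  have hShtH_mul : ShtH * ShtIH = 1 := by
    rw [hShtIHeq]; exact Matrix.mul_nonsing_inv _ hShtH_det
  have hShtIH_mul : ShtIH * ShtH = 1 := by
    rw [hShtIHeq]; exact Matrix.nonsing_inv_mul _ hShtH_det
  set E := StIH * (Sigmahat - Sigma) * StIH with hEdef
  have hDherm : (Sigmahat - Sigma).IsHermitian := hSigmahat.1.sub hSigma.1
  have hEherm : E.IsHermitian := by
    show Eᴴ = E
    rw [hEdef]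
    simp only [Matrix.conjTranspose_mul, hStIH.1.eq, hDherm.eq, Matrix.mul_assoc]
  have hStIH_St_StIH : StIH * St * StIH = 1 := by
    rw [← hStHsq]
    simp only [← Matrix.mul_assoc]
    rw [hStIH_mul, one_mul, hStH_mul]
  have hShtIH_Sht_ShtIH : ShtIH * Sht * ShtIH = 1 := by
    rw [← hShtHsq]
    simp only [← Matrix.mul_assoc]
    rw [hShtIH_mul, one_mul, hShtH_mul]
  have hB1 : StIH * Sht * StIH = 1 + E := by
    have hdecomp : Sht = (Sigmahat - Sigma) + St := by rw [hShtdef, hStdef]; abel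
    rw [hdecomp, Matrix.mul_add, Matrix.add_mul, hStIH_St_StIH, ← hEdef, add_comm]
  -- Goal 1
  have hBoxPSD : (Box • (1 : Matrix (Fin p) (Fin p) ℝ) + -E).PosSemidef :=
    psd_of_opNorm_le hEherm.neg (by rw [opNorm_neg]; exact hevent)
  have hNherm_t : (ShtH * StIH)ᴴ = StIH * ShtH := by
    rw [Matrix.conjTranspose_mul, hShtH.1, hStIH.1]
  have hNN : (ShtH * StIH)ᴴ * (ShtH * StIH) = 1 + E := by
    rw [hNherm_t, Matrix.mul_assoc StIH ShtH (ShtH * StIH),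
      ← Matrix.mul_assoc ShtH ShtH StIH, hShtHsq, ← Matrix.mul_assoc, hB1]
  have hPSD1 : ((1 + Box) • (1 : Matrix (Fin p) (Fin p) ℝ)
      - (ShtH * StIH)ᴴ * (ShtH * StIH)).PosSemidef := by
    have heq : (1 + Box) • (1 : Matrix (Fin p) (Fin p) ℝ) - (1 + E)
        = Box • (1 : Matrix (Fin p) (Fin p) ℝ) + -E := by
      rw [add_smul, one_smul]; abel
    rw [hNN, heq]; exact hBoxPSD
  have hNle : opNorm (ShtH * StIH) ^ 2 ≤ 1 + Box := sq_opNorm_le (by linarith) hPSD1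
  have goal1 : opNorm (StIH * ShtH) ^ 2 ≤ 1 + Box := by
    calc opNorm (StIH * ShtH) ^ 2 = opNorm (ShtH * StIH)ᵀ ^ 2 := by
          rw [← conjT_eq_transpose, hNherm_t]
      _ ≤ opNorm (ShtH * StIH) ^ 2 :=
          pow_le_pow_left₀ (opNorm_nonneg _) (opNorm_transpose_le _) 2
      _ ≤ 1 + Box := hNle
  -- key PSD fact : 2•Sht - St is PSD
  have h2EPSD : ((1 : Matrix (Fin p) (Fin p) ℝ) + (2:ℝ) • E).PosSemidef := by
    have hBE : (Box • (1 : Matrix (Fin p) (Fin p) ℝ) + E).PosSemidef :=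
      psd_of_opNorm_le hEherm hevent
    have ha := hBE.add hBE
    have hb : (((1:ℝ) - 2 * Box) • (1 : Matrix (Fin p) (Fin p) ℝ)).PosSemidef :=
      smul_one_posSemidef (by linarith)
    have hsum := ha.add hb
    have heq : Box • (1 : Matrix (Fin p) (Fin p) ℝ) + E
        + (Box • (1 : Matrix (Fin p) (Fin p) ℝ) + E)
        + ((1:ℝ) - 2 * Box) • (1 : Matrix (Fin p) (Fin p) ℝ)
        = (1 : Matrix (Fin p) (Fin p) ℝ) + (2:ℝ) • E := by
      module
    rwa [heq] at hsum
  have hE2 : StH * E * StH = Sigmahat - Sigma := by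
    rw [hEdef]
    simp only [← Matrix.mul_assoc]
    rw [hStH_mul, one_mul, Matrix.mul_assoc, hStIH_mul, Matrix.mul_one]
  have hkey2 : ((2:ℝ) • Sht - St).PosSemidef := by
    have hconj := h2EPSD.mul_mul_conjTranspose_same StH
    rw [hStH.1] at hconj
    have hcomp : StH * ((1 : Matrix (Fin p) (Fin p) ℝ) + (2:ℝ) • E) * StH
        = (2:ℝ) • Sht - St := by
      rw [Matrix.mul_add, Matrix.add_mul, Matrix.mul_one, Matrix.mul_smul, Matrix.smul_mul,
        hStHsq, hE2, hShtdef, hStdef]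
      module
    rw [hcomp] at hconj; exact hconj
  -- Goal 2
  have hAA2 : (StH * ShtIH)ᴴ * (StH * ShtIH) = ShtIH * St * ShtIH := by
    rw [Matrix.conjTranspose_mul, hStH.1, hShtIH.1,
      Matrix.mul_assoc ShtIH StH (StH * ShtIH), ← Matrix.mul_assoc StH StH ShtIH, hStHsq,
      ← Matrix.mul_assoc]
  have hcompgen : ∀ B : Matrix (Fin p) (Fin p) ℝ,
      ShtIH * ((2:ℝ) • Sht - B) * ShtIH
      = (2:ℝ) • (1 : Matrix (Fin p) (Fin p) ℝ) - ShtIH * B * ShtIH := by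
    intro B
    rw [Matrix.mul_sub, Matrix.sub_mul, Matrix.mul_smul, Matrix.smul_mul, hShtIH_Sht_ShtIH]
  have hPSD2 : ((2:ℝ) • (1 : Matrix (Fin p) (Fin p) ℝ)
      - (StH * ShtIH)ᴴ * (StH * ShtIH)).PosSemidef := by
    rw [hAA2]
    have hconj := hkey2.mul_mul_conjTranspose_same ShtIH
    rw [hShtIH.1, hcompgen St] at hconj
    exact hconj
  have goal2 : opNorm (StH * ShtIH) ^ 2 ≤ 2 := sq_opNorm_le (by norm_num) hPSD2
  refine ⟨⟨goal1, by linarith⟩, goal2, ?_⟩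
  -- Goal 3
  intro P Q _ _ _ hPle hQ hQsq
  have hAA3 : (Q * ShtIH)ᴴ * (Q * ShtIH) = ShtIH * (P * Sigma * P) * ShtIH := by
    rw [Matrix.conjTranspose_mul, hShtIH.1, hQ.1,
      Matrix.mul_assoc ShtIH Q (Q * ShtIH), ← Matrix.mul_assoc Q Q ShtIH, hQsq,
      ← Matrix.mul_assoc]
  have hkey3 : ((2:ℝ) • Sht - P * Sigma * P).PosSemidef := by
    have hsum := hkey2.add hPle
    have heq : (2:ℝ) • Sht - St + (St - P * Sigma * P) = (2:ℝ) • Sht - P * Sigma * P := by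
      abel
    rwa [heq] at hsum
  have hPSD3 : ((2:ℝ) • (1 : Matrix (Fin p) (Fin p) ℝ)
      - (Q * ShtIH)ᴴ * (Q * ShtIH)).PosSemidef := by
    rw [hAA3]
    have hconj := hkey3.mul_mul_conjTranspose_same ShtIH
    rw [hShtIH.1, hcompgen (P * Sigma * P)] at hconj
    exact hconj
  exact sq_opNorm_le (by norm_num) hPSD3


end SpecFSD11
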